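/- Let B, C be finite-dimensional algebras, M a C-B-bimodule, A = [[B, 0], [M, C]]. If (M₁, …, M_r) is a complete forward hom-orthogonal sequence of bricks in mod B and (N₁, …, N_s) is a complete forward hom-orthogonal sequence in mod C, then the concatenation ((M₁,0), …, (M_r,0), (0,N₁)', …, (0,N_s)') — identifying B-modules and C-modules with A-modules via the canonical embeddings — is a complete forward hom-orthogonal sequence in mod A. -/

import Mathlib

open CategoryTheory CategoryTheory.Limits

universe v u
namespace Paper
variable {𝒜 : Type u} [Category.{v} 𝒜] [Abelian 𝒜]

def IsLeftApprox (𝒯 : Set 𝒜) {X T : 𝒜} (f : X ⟶ T) : Prop :=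
  T ∈ 𝒯 ∧ ∀ ⦃T' : 𝒜⦄, T' ∈ 𝒯 → ∀ g : X ⟶ T', ∃ h : T ⟶ T', f ≫ h = g

def IsRightApprox (𝒯 : Set 𝒜) {T X : 𝒜} (f : T ⟶ X) : Prop :=
  T ∈ 𝒯 ∧ ∀ ⦃T' : 𝒜⦄, T' ∈ 𝒯 → ∀ g : T' ⟶ X, ∃ h : T' ⟶ T, h ≫ f = g

def CovariantlyFinite (𝒯 : Set 𝒜) : Prop :=
  ∀ X : 𝒜, ∃ (T : 𝒜) (f : X ⟶ T), IsLeftApprox 𝒯 f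

def ContravariantlyFinite (𝒯 : Set 𝒜) : Prop :=
  ∀ X : 𝒜, ∃ (T : 𝒜) (f : T ⟶ X), IsRightApprox 𝒯 f

def FunctoriallyFinite (𝒯 : Set 𝒜) : Prop :=
  CovariantlyFinite 𝒯 ∧ ContravariantlyFinite 𝒯

def IsTorsionClass (𝒯 : Set 𝒜) : Prop :=
  (∀ ⦃X Y : 𝒜⦄ (f : X ⟶ Y), Epi f → X ∈ 𝒯 → Y ∈ 𝒯) ∧
  (∀ S : ShortComplex 𝒜, S.ShortExact → S.X₁ ∈ 𝒯 → S.X₃ ∈ 𝒯 → S.X₂ ∈ 𝒯)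

def AddCl (𝒞 : Set 𝒜) : Set 𝒜 :=
  {X | ∃ (n : ℕ) (T : Fin n → 𝒜) (_ : ∀ i, T i ∈ 𝒞)
        (s : ∀ i, X ⟶ T i) (r : ∀ i, T i ⟶ X), (∑ i, s i ≫ r i) = 𝟙 X}

def FacCl (𝒞 : Set 𝒜) : Set 𝒜 :=
  {Y | ∃ X ∈ AddCl 𝒞, ∃ f : X ⟶ Y, Epi f}

def ExtProjIn (𝒯 : Set 𝒜) (Z : 𝒜) : Prop :=
  Z ∈ 𝒯 ∧ ∀ S : ShortComplex 𝒜, S.ShortExact → S.X₁ ∈ 𝒯 → S.X₃ = Z →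
    Nonempty S.Splitting

def IsSupportTauTilting (Z : 𝒜) : Prop :=
  IsTorsionClass (FacCl {Z}) ∧ FunctoriallyFinite (FacCl {Z}) ∧
  ∀ W : 𝒜, ExtProjIn (FacCl {Z}) W ↔ W ∈ AddCl {Z}

def Sincere (𝒯 : Set 𝒜) : Prop :=
  ∀ S : 𝒜, Simple S → ∃ T ∈ 𝒯, ∃ (N : 𝒜) (i : N ⟶ T) (p : N ⟶ S), Mono i ∧ Epi p

def IsTauTilting (Z : 𝒜) : Prop :=
  IsSupportTauTilting Z ∧ Sincere (FacCl {Z})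

def IsBrick (S : 𝒜) : Prop :=
  ¬ IsZero S ∧ ∀ f : S ⟶ S, f ≠ 0 → IsIso f

end Paper

namespace Tri
variable (B C M : Type) [Ring B] [Ring C]
  [AddCommGroup M] [Module B M] [Module C M] [SMulCommClass B C M]

/-- the condition for `φ : Y → M → V` to correspond to a `B`-linear map `Y ⊗_C M → V`:
biadditive, `B`-linear in the second variable and `C`-balanced. -/
def IsBal {Y V : Type} [AddCommGroup Y] [Module C Y] [AddCommGroup V] [Module B V]
    (φ : Y → M → V) : Prop :=
  (∀ y y' m, φ (y + y') m = φ y m + φ y' m) ∧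
  (∀ y m m', φ y (m + m') = φ y m + φ y m') ∧
  (∀ (b : B) y m, φ y (b • m) = b • φ y m) ∧
  (∀ (c : C) y m, φ (c • y) m = φ y (c • m))

/-- a right module over the triangular matrix algebra `A = [[B,0],[M,C]]`, presented as
a triple `(X, Y)_φ` where `φ` encodes the `B`-linear map `Y ⊗_C M → X`. -/
structure Trip where
  X : Type
  [addX : AddCommGroup X]
  [modX : Module B X]
  Y : Type
  [addY : AddCommGroup Y]
  [modY : Module C Y]
  φ : Y → M → X
  bal : IsBal B C M φ

attribute [instance] Trip.addX Trip.modX Trip.addY Trip.modY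

variable {B C M}

/-- morphisms of triples: pairs `(α, β)` compatible with the structure maps. -/
structure Hom (T T' : Trip B C M) where
  α : T.X →ₗ[B] T'.X
  β : T.Y →ₗ[C] T'.Y
  comm : ∀ y m, α (T.φ y m) = T'.φ (β y) m

def Hom.comp {T₁ T₂ T₃ : Trip B C M} (f : Hom T₁ T₂) (g : Hom T₂ T₃) : Hom T₁ T₃ :=
  ⟨g.α ∘ₗ f.α, g.β ∘ₗ f.β, fun y m => by
    simp only [LinearMap.comp_apply, f.comm, g.comm]⟩

def Hom.idH (T : Trip B C M) : Hom T T := ⟨LinearMap.id, LinearMap.id, fun _ _ => rfl⟩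

def Hom.add {T T' : Trip B C M} (f g : Hom T T') : Hom T T' :=
  ⟨f.α + g.α, f.β + g.β, fun y m => by
    simp only [LinearMap.add_apply, f.comm, g.comm, (T'.bal).1]⟩

def Hom.Surj {T T' : Trip B C M} (f : Hom T T') : Prop :=
  Function.Surjective f.α ∧ Function.Surjective f.β

/-- a short exact sequence of triples (exactness is componentwise). -/
structure SES (T₁ T₂ T₃ : Trip B C M) where
  f : Hom T₁ T₂
  g : Hom T₂ T₃
  injα : Function.Injective f.α
  injβ : Function.Injective f.β
  surjα : Function.Surjective g.α
  surjβ : Function.Surjective g.β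
  exactα : LinearMap.range f.α = LinearMap.ker g.α
  exactβ : LinearMap.range f.β = LinearMap.ker g.β

def SES.Splits {T₁ T₂ T₃ : Trip B C M} (s : SES T₁ T₂ T₃) : Prop :=
  ∃ r : Hom T₂ T₁, r.α ∘ₗ s.f.α = LinearMap.id ∧ r.β ∘ₗ s.f.β = LinearMap.id

/-- torsion class of triples: closed under quotients and extensions. -/
def TorsCl (𝒯 : Set (Trip B C M)) : Prop :=
  (∀ T T' : Trip B C M, ∀ f : Hom T T', f.Surj → T ∈ 𝒯 → T' ∈ 𝒯) ∧
  (∀ T₁ T₂ T₃ : Trip B C M, SES T₁ T₂ T₃ → T₁ ∈ 𝒯 → T₃ ∈ 𝒯 → T₂ ∈ 𝒯)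

/-- additive closure in the category of triples. -/
def AddT (𝒞 : Set (Trip B C M)) : Set (Trip B C M) :=
  {T | ∃ (n : ℕ) (G : Fin n → Trip B C M) (_ : ∀ i, G i ∈ 𝒞)
        (s : ∀ i, Hom T (G i)) (r : ∀ i, Hom (G i) T),
      (∑ i, (r i).α ∘ₗ (s i).α) = LinearMap.id ∧
      (∑ i, (r i).β ∘ₗ (s i).β) = LinearMap.id}

/-- `Fac` in the category of triples: quotients of finite direct sums, i.e. jointly
surjective finite families of maps from objects of `𝒞`. -/
def FacT (𝒞 : Set (Trip B C M)) : Set (Trip B C M) :=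
  {T | ∃ (n : ℕ) (G : Fin n → Trip B C M) (_ : ∀ i, G i ∈ 𝒞) (f : ∀ i, Hom (G i) T),
      (⨆ i, LinearMap.range (f i).α) = ⊤ ∧ (⨆ i, LinearMap.range (f i).β) = ⊤}

def LeftApproxT (𝒯 : Set (Trip B C M)) {T T' : Trip B C M} (f : Hom T T') : Prop :=
  T' ∈ 𝒯 ∧ ∀ W, W ∈ 𝒯 → ∀ g : Hom T W, ∃ h : Hom T' W, Hom.comp f h = g

def RightApproxT (𝒯 : Set (Trip B C M)) {T' T : Trip B C M} (f : Hom T' T) : Prop :=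
  T' ∈ 𝒯 ∧ ∀ W, W ∈ 𝒯 → ∀ g : Hom W T, ∃ h : Hom W T', Hom.comp h f = g

def CovFinT (𝒯 : Set (Trip B C M)) : Prop :=
  ∀ T : Trip B C M, ∃ (T' : Trip B C M) (f : Hom T T'), LeftApproxT 𝒯 f

def ContraFinT (𝒯 : Set (Trip B C M)) : Prop :=
  ∀ T : Trip B C M, ∃ (T' : Trip B C M) (f : Hom T' T), RightApproxT 𝒯 f

def FunctFinT (𝒯 : Set (Trip B C M)) : Prop := CovFinT 𝒯 ∧ ContraFinT 𝒯

def ExtProjT (𝒯 : Set (Trip B C M)) (Z : Trip B C M) : Prop :=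
  Z ∈ 𝒯 ∧ ∀ T₁ T₂ : Trip B C M, ∀ s : SES T₁ T₂ Z, T₁ ∈ 𝒯 → s.Splits

/-- support τ-tilting triple, via the Adachi–Iyama–Reiten correspondence. -/
def STauTiltT (Z : Trip B C M) : Prop :=
  TorsCl (FacT {Z}) ∧ FunctFinT (FacT {Z}) ∧
  ∀ W : Trip B C M, ExtProjT (FacT {Z}) W ↔ W ∈ AddT {Z}

/-- a module is sincere if every simple module is one of its subquotients
(equivalently, a composition factor). -/
def SincereMod (R : Type) [Ring R] (V : Type) [AddCommGroup V] [Module R V] : Prop :=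
  ∀ (S : Type) [AddCommGroup S] [Module R S], IsSimpleModule R S →
    ∃ (N : Submodule R V) (P : Submodule R ↥N), Nonempty ((↥N ⧸ P) ≃ₗ[R] S)

/-- τ-tilting triple: support τ-tilting and sincere (equivalently, corresponding to a
sincere functorially finite torsion class). -/
def TauTiltT (Z : Trip B C M) : Prop :=
  STauTiltT Z ∧ SincereMod B Z.X ∧ SincereMod C Z.Y

/-- `^⊥(τ Z)` via the AIR characterization:
`N ∈ ^⊥(τZ)` iff `Ext¹(Z, Fac N) = 0`. -/
def PerpTauT (Z : Trip B C M) : Set (Trip B C M) :=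
  {N | ∀ T₁ T₂ : Trip B C M, ∀ s : SES T₁ T₂ Z, T₁ ∈ FacT {N} → s.Splits}

def TripBrick (T : Trip B C M) : Prop :=
  (¬ (Subsingleton T.X ∧ Subsingleton T.Y)) ∧
  ∀ e : Hom T T, ¬ (e.α = 0 ∧ e.β = 0) →
    ∃ e' : Hom T T, e'.α ∘ₗ e.α = LinearMap.id ∧ e.α ∘ₗ e'.α = LinearMap.id ∧
      e'.β ∘ₗ e.β = LinearMap.id ∧ e.β ∘ₗ e'.β = LinearMap.id

variable (B C M)

/-- the embedding of a `B`-module as the triple `(V, 0)`. -/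
def ofB (V : Type) [AddCommGroup V] [Module B V] : Trip B C M :=
  { X := V, Y := PUnit, φ := fun _ _ => 0,
    bal := ⟨fun _ _ _ => by simp, fun _ _ _ => by simp,
            fun _ _ _ => by simp, fun _ _ _ => by simp⟩ }

/-- the embedding of a `C`-module as the triple `(0, W)`. -/
def ofC (W : Type) [AddCommGroup W] [Module C W] : Trip B C M :=
  { X := PUnit, Y := W, φ := fun _ _ => 0,
    bal := ⟨fun _ _ _ => by simp, fun _ _ _ => by simp,
            fun _ _ _ => by simp, fun _ _ _ => by simp⟩ }

/-- the triple `(V, 0) ⊕ (X', Y')_φ`, realized as `(V × X', Y')`. -/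
def sumB (V : Type) [AddCommGroup V] [Module B V] (T : Trip B C M) : Trip B C M :=
  { X := V × T.X, Y := T.Y, φ := fun y m => (0, T.φ y m),
    bal := ⟨fun y y' m => by simp [T.bal.1, Prod.ext_iff],
            fun y m m' => by simp [T.bal.2.1, Prod.ext_iff],
            fun b y m => by simp [T.bal.2.2.1, Prod.ext_iff],
            fun c y m => by simp [T.bal.2.2.2]⟩ }

/-- `φ : Y → M → V` is a minimal left `Fac X`-approximation of `Y ⊗_C M`
(approximation property phrased via balanced maps, which correspond to `B`-linear maps
out of `Y ⊗_C M`). -/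
def IsMinLeftFacApprox (X : ModuleCat.{0} B) (Y : ModuleCat.{0} C)
    (V : Type) [AddCommGroup V] [Module B V] (φ : ↥Y → M → V) : Prop :=
  IsBal B C M φ ∧
  (ModuleCat.of B V ∈ Paper.FacCl ({X} : Set (ModuleCat.{0} B))) ∧
  (∀ W : ModuleCat.{0} B, W ∈ Paper.FacCl ({X} : Set (ModuleCat.{0} B)) →
    ∀ ψ : ↥Y → M → ↥W, IsBal B C M ψ →
      ∃ h : V →ₗ[B] ↥W, ∀ y m, h (φ y m) = ψ y m) ∧
  (∀ g : V →ₗ[B] V, (∀ y m, g (φ y m) = φ y m) → Function.Bijective g)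

end Tri

open Paper in
/-- a complete forward hom-orthogonal sequence of bricks in `Mod R`. -/
def IsCFHOMod (R : Type) [Ring R] (n : ℕ) (L : Fin n → ModuleCat.{0} R) : Prop :=
  ((∀ i, IsBrick (L i)) ∧ ∀ i j : Fin n, i < j → ∀ f : L i ⟶ L j, f = 0) ∧
  ¬ ∃ (p : Fin (n + 1)) (S : ModuleCat.{0} R), IsBrick S ∧
      (∀ i : Fin n, (i : ℕ) < (p : ℕ) → ∀ f : L i ⟶ S, f = 0) ∧
      (∀ j : Fin n, (p : ℕ) ≤ (j : ℕ) → ∀ f : S ⟶ L j, f = 0)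

open Tri in
/-- a complete forward hom-orthogonal sequence of bricks in the category of triples. -/
def IsCFHOT
    {B C M : Type} [Ring B] [Ring C]
    [AddCommGroup M] [Module B M] [Module C M] [SMulCommClass B C M]
    (n : ℕ) (L : Fin n → Trip B C M) : Prop :=
  ((∀ i, TripBrick (L i)) ∧
    ∀ i j : Fin n, i < j → ∀ e : Hom (L i) (L j), e.α = 0 ∧ e.β = 0) ∧
  ¬ ∃ (p : Fin (n + 1)) (S : Trip B C M), TripBrick S ∧
      (∀ i : Fin n, (i : ℕ) < (p : ℕ) → ∀ e : Hom (L i) S, e.α = 0 ∧ e.β = 0) ∧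
      (∀ j : Fin n, (p : ℕ) ≤ (j : ℕ) → ∀ e : Hom S (L j), e.α = 0 ∧ e.β = 0)

section AuxStmt16

open CategoryTheory CategoryTheory.Limits Paper Tri

namespace Stmt16Aux

/-! ### Generic linear algebra lemmas -/

theorem lmap_to_ss {R A P : Type} [Ring R] [AddCommGroup A] [Module R A]
    [AddCommGroup P] [Module R P] [Subsingleton P] (f : A →ₗ[R] P) : f = 0 :=
  LinearMap.ext fun _ => Subsingleton.elim _ _

theorem lmap_from_ss {R A P : Type} [Ring R] [AddCommGroup A] [Module R A]
    [AddCommGroup P] [Module R P] [Subsingleton P] (f : P →ₗ[R] A) : f = 0 :=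
  LinearMap.ext fun x => by rw [Subsingleton.elim x (0 : P)]; exact map_zero f

theorem phi_zero {B C M : Type} [Ring B] [Ring C] [AddCommGroup M] [Module B M] [Module C M]
    [SMulCommClass B C M] (T : Trip B C M) (m : M) : T.φ 0 m = 0 := by
  have h := T.bal.1 0 0 m
  rw [add_zero] at h
  exact (left_eq_add.mp h)

/-! ### ModuleCat lemmas -/

theorem subsingleton_of_isZero {R : Type} [Ring R] {Mo : ModuleCat.{0} R} (h : IsZero Mo) :
    Subsingleton ↥Mo := by
  have h0 : (𝟙 Mo : Mo ⟶ Mo) = 0 := h.eq_of_src _ _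
  refine ⟨fun a b => ?_⟩
  have ha : a = (0 : Mo ⟶ Mo).hom a := congrArg (fun g : Mo ⟶ Mo => g.hom a) h0
  have hb : b = (0 : Mo ⟶ Mo).hom b := congrArg (fun g : Mo ⟶ Mo => g.hom b) h0
  exact ha.trans hb.symm

theorem brick_of_simple {R T : Type} [Ring R] [AddCommGroup T] [Module R T]
    (hT : IsSimpleModule R T) : IsBrick (ModuleCat.of R T) := by
  constructor
  · intro hz
    haveI : Subsingleton T := subsingleton_of_isZero hz
    haveI := hT
    haveI : Nontrivial T := IsSimpleModule.nontrivial R T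
    exact not_subsingleton T ‹_›
  · intro f hf
    have hker := eq_bot_or_eq_top (LinearMap.ker f.hom)
    have hrange := eq_bot_or_eq_top (LinearMap.range f.hom)
    have hk : LinearMap.ker f.hom = ⊥ := by
      rcases hker with h | h
      · exact h
      · exact absurd (ModuleCat.hom_ext (LinearMap.ker_eq_top.mp h)) hf
    have hr : LinearMap.range f.hom = ⊤ := by
      rcases hrange with h | h
      · exact absurd (ModuleCat.hom_ext (LinearMap.range_eq_bot.mp h)) hf
      · exact h
    let e := LinearEquiv.ofBijective f.hom
      ⟨LinearMap.ker_eq_bot.mp hk, LinearMap.range_eq_top.mp hr⟩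
    exact ⟨⟨ModuleCat.ofHom e.symm.toLinearMap,
      ModuleCat.hom_ext (LinearMap.ext fun x => e.symm_apply_apply x),
      ModuleCat.hom_ext (LinearMap.ext fun x => e.apply_symm_apply x)⟩⟩

/-! ### Bricks and the embeddings `ofB`, `ofC` -/

variable {B C M : Type} [Ring B] [Ring C] [AddCommGroup M] [Module B M]
  [Module C M] [SMulCommClass B C M]

theorem tripBrick_ofB (V : ModuleCat.{0} B) (hV : IsBrick V) :
    TripBrick (ofB B C M ↥V) := by
  constructor
  · rintro ⟨h1, _⟩
    haveI : Subsingleton ↥V := h1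
    exact hV.1 (ModuleCat.isZero_of_subsingleton V)
  · intro e he
    haveI : Subsingleton (ofB B C M ↥V).Y := inferInstanceAs (Subsingleton PUnit)
    have hβ : e.β = 0 := lmap_to_ss _
    have hα : e.α ≠ 0 := fun h => he ⟨h, hβ⟩
    have hiso : IsIso (show V ⟶ V from ModuleCat.ofHom e.α) :=
      hV.2 _ (fun h => hα (congrArg ModuleCat.Hom.hom h))
    obtain ⟨g, hg1, hg2⟩ := hiso.out
    exact ⟨⟨g.hom, LinearMap.id, fun _ _ => map_zero g.hom⟩,
      congrArg ModuleCat.Hom.hom hg1, congrArg ModuleCat.Hom.hom hg2, LinearMap.ext fun x => Subsingleton.elim _ _,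
      LinearMap.ext fun x => Subsingleton.elim _ _⟩

theorem tripBrick_ofC (V : ModuleCat.{0} C) (hV : IsBrick V) :
    TripBrick (ofC B C M ↥V) := by
  constructor
  · rintro ⟨_, h2⟩
    haveI : Subsingleton ↥V := h2
    exact hV.1 (ModuleCat.isZero_of_subsingleton V)
  · intro e he
    haveI : Subsingleton (ofC B C M ↥V).X := inferInstanceAs (Subsingleton PUnit)
    have hα : e.α = 0 := lmap_to_ss _
    have hβ : e.β ≠ 0 := fun h => he ⟨hα, h⟩
    have hiso : IsIso (show V ⟶ V from ModuleCat.ofHom e.β) :=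
      hV.2 _ (fun h => hβ (congrArg ModuleCat.Hom.hom h))
    obtain ⟨g, hg1, hg2⟩ := hiso.out
    exact ⟨⟨LinearMap.id, g.hom, fun _ _ => Subsingleton.elim _ _⟩,
      LinearMap.ext fun x => Subsingleton.elim _ _,
      LinearMap.ext fun x => Subsingleton.elim _ _,
      congrArg ModuleCat.Hom.hom hg1, congrArg ModuleCat.Hom.hom hg2⟩

theorem brickX_of_tripBrick {S : Trip B C M} (hS : TripBrick S)
    (hY : Subsingleton S.Y) : IsBrick (ModuleCat.of B S.X) := by
  constructor
  · intro hz
    exact hS.1 ⟨subsingleton_of_isZero hz, hY⟩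
  · intro f hf
    have comm : ∀ y m, f.hom (S.φ y m) = S.φ ((0 : S.Y →ₗ[C] S.Y) y) m := by
      intro y m
      rw [Subsingleton.elim y (0 : S.Y), phi_zero, map_zero, LinearMap.zero_apply, phi_zero]
    obtain ⟨e', h1, h2, _, _⟩ := hS.2 ⟨f.hom, 0, comm⟩ (fun h => hf (ModuleCat.hom_ext h.1))
    exact ⟨⟨ModuleCat.ofHom e'.α, ModuleCat.hom_ext h1, ModuleCat.hom_ext h2⟩⟩

theorem brickY_of_tripBrick {S : Trip B C M} (hS : TripBrick S)
    (hX : Subsingleton S.X) : IsBrick (ModuleCat.of C S.Y) := by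
  constructor
  · intro hz
    exact hS.1 ⟨hX, subsingleton_of_isZero hz⟩
  · intro f hf
    have comm : ∀ y m, (0 : S.X →ₗ[B] S.X) (S.φ y m) = S.φ (f.hom y) m :=
      fun _ _ => Subsingleton.elim _ _
    obtain ⟨e', _, _, h3, h4⟩ := hS.2 ⟨0, f.hom, comm⟩ (fun h => hf (ModuleCat.hom_ext h.2))
    exact ⟨⟨ModuleCat.ofHom e'.β, ModuleCat.hom_ext h3, ModuleCat.hom_ext h4⟩⟩

end Stmt16Aux

/-! ### The dual of `C` as a left `C`-module, and existence of simple subs/quotients -/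

namespace Stmt16Aux

variable (k C : Type) [Field k] [Ring C] [Algebra k C]

instance dcModule : Module C (C →ₗ[k] k) where
  smul c f := f.comp (LinearMap.mulRight k c)
  one_smul f := LinearMap.ext fun x => by
    show f (x * 1) = f x
    rw [mul_one]
  mul_smul c d f := LinearMap.ext fun x => by
    show f (x * (c * d)) = f ((x * c) * d)
    rw [mul_assoc]
  smul_zero c := rfl
  smul_add c f g := rfl
  add_smul c d f := LinearMap.ext fun x => by
    show f (x * (c + d)) = f (x * c) + f (x * d)
    rw [mul_add, map_add]
  zero_smul f := LinearMap.ext fun x => by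
    show f (x * 0) = 0
    rw [mul_zero, map_zero]

instance dcTower : IsScalarTower k C (C →ₗ[k] k) :=
  ⟨fun a c f => LinearMap.ext fun x => by
    show f (x * (a • c)) = a • f (x * c)
    rw [mul_smul_comm, map_smul]⟩

variable {k C}

theorem exists_simple_quot {Y : Type} [AddCommGroup Y] [Module C Y]
    [FiniteDimensional k C] (y : Y) (hy : y ≠ 0) :
    ∃ (T : Type) (_ : AddCommGroup T) (_ : Module C T), IsSimpleModule C T ∧
      ∃ π : Y →ₗ[C] T, Function.Surjective π := by
  letI : Module k Y := Module.compHom Y (algebraMap k C)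
  haveI : IsScalarTower k C Y :=
    ⟨fun a c x => by
      show (a • c) • x = algebraMap k C a • c • x
      rw [Algebra.smul_def, mul_smul]⟩
  obtain ⟨lam, hlam⟩ : ∃ φ : Module.Dual k Y, φ y ≠ 0 := by
    by_contra h
    push_neg at h
    exact hy ((Module.forall_dual_apply_eq_zero_iff k y).mp h)
  let Λ : Y →ₗ[C] (C →ₗ[k] k) :=
    { toFun := fun z => lam ∘ₗ
        { toFun := fun x : C => x • z
          map_add' := fun x x' => add_smul x x' z
          map_smul' := fun a x => by
            simp only [RingHom.id_apply]
            exact smul_assoc a x z }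
      map_add' := fun z z' => LinearMap.ext fun x => by
        show lam (x • (z + z')) = lam (x • z) + lam (x • z')
        rw [smul_add, map_add]
      map_smul' := fun c z => LinearMap.ext fun x => by
        show lam (x • (c • z)) = lam ((x * c) • z)
        rw [mul_smul] }
  have hΛy : Λ y ≠ 0 := by
    intro h
    have h2 : lam ((1 : C) • y) = 0 := congrFun (congrArg DFunLike.coe h) (1 : C)
    rw [one_smul] at h2
    exact hlam h2
  haveI : IsNoetherian C (C →ₗ[k] k) := isNoetherian_of_tower k inferInstance
  set W := LinearMap.range Λ with hW
  have hbot : (⊥ : Submodule C ↥W) ≠ ⊤ := by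
    intro h
    have hmem : Λ y ∈ W := LinearMap.mem_range_self Λ y
    have h3 : (⟨Λ y, hmem⟩ : ↥W) ∈ (⊥ : Submodule C ↥W) := h ▸ Submodule.mem_top
    have h4 := (Submodule.mem_bot C).mp h3
    exact hΛy (congrArg Subtype.val h4)
  obtain ⟨m, hm, -⟩ := (eq_top_or_exists_le_coatom (⊥ : Submodule C ↥W)).resolve_left hbot
  letI : AddCommGroup ↥W := Submodule.addCommGroup W
  refine ⟨↥W ⧸ m, inferInstance, inferInstance, isSimpleModule_iff_isCoatom.mpr hm, ?_⟩
  exact ⟨m.mkQ ∘ₗ Λ.rangeRestrict,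
    (Submodule.mkQ_surjective m).comp (LinearMap.surjective_rangeRestrict Λ)⟩

theorem exists_simple_sub {B : Type} [Ring B] [Algebra k B] [FiniteDimensional k B]
    {X : Type} [AddCommGroup X] [Module B X] (x : X) (hx : x ≠ 0) :
    ∃ (T : Type) (_ : AddCommGroup T) (_ : Module B T), IsSimpleModule B T ∧
      ∃ ι : T →ₗ[B] X, Function.Injective ι := by
  haveI : IsArtinian B B := isArtinian_of_tower k inferInstance
  set ψ := LinearMap.toSpanSingleton B X x with hψ
  set K := LinearMap.ker ψ with hK
  haveI : IsArtinian B (B ⧸ K) := isArtinian_of_surjective B K.mkQ (Submodule.mkQ_surjective K)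
  have h1 : (1 : B) ∉ K := by
    intro h
    have h2 := LinearMap.mem_ker.mp h
    rw [hψ, LinearMap.toSpanSingleton_apply, one_smul] at h2
    exact hx h2
  obtain ⟨a, ha, -⟩ := (eq_bot_or_exists_atom_le (⊤ : Submodule B (B ⧸ K))).resolve_left (by
    intro h
    have h3 : (Submodule.Quotient.mk (1 : B) : B ⧸ K) ∈ (⊥ : Submodule B (B ⧸ K)) :=
      h ▸ Submodule.mem_top
    exact h1 ((Submodule.Quotient.mk_eq_zero K).mp ((Submodule.mem_bot _).mp h3)))
  have hinj : Function.Injective (K.liftQ ψ le_rfl) := by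
    rw [← LinearMap.ker_eq_bot]
    exact Submodule.ker_liftQ_eq_bot _ _ _ le_rfl
  exact ⟨↥a, inferInstance, inferInstance, isSimpleModule_iff_isAtom.mpr ha,
    (K.liftQ ψ le_rfl) ∘ₗ a.subtype, hinj.comp a.injective_subtype⟩

end Stmt16Aux

end AuxStmt16

section MainStmt16

open CategoryTheory CategoryTheory.Limits Paper Tri Stmt16Aux

theorem stmt16_main_aux
    {k : Type} [Field k] {B C M : Type}
    [Ring B] [Algebra k B] [FiniteDimensional k B]
    [Ring C] [Algebra k C] [FiniteDimensional k C]
    [AddCommGroup M] [Module B M] [Module C M] [SMulCommClass B C M]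
    (r s : ℕ) (Ms : Fin r → ModuleCat.{0} B) (Ns : Fin s → ModuleCat.{0} C)
    (hM : IsCFHOMod B r Ms) (hN : IsCFHOMod C s Ns)
    (L : Fin (r + s) → Trip B C M)
    (hBa : ∀ (i : Fin (r + s)) (h : (i : ℕ) < r), L i = ofB B C M ↥(Ms ⟨(i : ℕ), h⟩))
    (hCa : ∀ (i : Fin (r + s)) (h : r ≤ (i : ℕ)),
      L i = ofC B C M ↥(Ns ⟨(i : ℕ) - r, by have := i.isLt; omega⟩)) :
    IsCFHOT (r + s) L := by
  -- specialized forms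
  have hBt : ∀ t : Fin r, L ⟨t.1, by omega⟩ = ofB B C M ↥(Ms t) := fun t =>
    hBa ⟨t.1, by omega⟩ t.isLt
  have hCt : ∀ t : Fin s, L ⟨r + t.1, by omega⟩ = ofC B C M ↥(Ns t) := by
    intro t
    rw [hCa ⟨r + t.1, by omega⟩ (by exact Nat.le_add_right r t.1)]
    have hfin : (⟨r + t.1 - r, by omega⟩ : Fin s) = t := Fin.ext (show r + t.1 - r = t.1 by omega)
    exact congrArg (fun z : Fin s => ofC B C M ↥(Ns z)) hfin
  refine ⟨⟨?_, ?_⟩, ?_⟩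
  · -- each term is a brick
    intro i
    rcases Nat.lt_or_ge i.1 r with h | h
    · rw [hBa i h]
      exact tripBrick_ofB _ (hM.1.1 ⟨i.1, h⟩)
    · rw [hCa i h]
      exact tripBrick_ofC _ (hN.1.1 ⟨i.1 - r, by have := i.isLt; omega⟩)
  · -- forward hom-orthogonality
    intro i j hij
    have hij' : i.1 < j.1 := hij
    rcases Nat.lt_or_ge i.1 r with hi | hi
    · rcases Nat.lt_or_ge j.1 r with hj | hj
      · rw [hBa i hi, hBa j hj]
        intro e
        haveI : Subsingleton (ofB B C M ↥(Ms ⟨j.1, hj⟩)).Y := inferInstanceAs (Subsingleton PUnit)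
        refine ⟨?_, lmap_to_ss _⟩
        exact congrArg ModuleCat.Hom.hom (hM.1.2 ⟨i.1, hi⟩ ⟨j.1, hj⟩ (by exact hij')
          (show Ms ⟨i.1, hi⟩ ⟶ Ms ⟨j.1, hj⟩ from ModuleCat.ofHom e.α))
      · rw [hBa i hi, hCa j hj]
        intro e
        haveI : Subsingleton (ofC B C M ↥(Ns ⟨j.1 - r, by have := j.isLt; omega⟩)).X :=
          inferInstanceAs (Subsingleton PUnit)
        haveI : Subsingleton (ofB B C M ↥(Ms ⟨i.1, hi⟩)).Y := inferInstanceAs (Subsingleton PUnit)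
        exact ⟨lmap_to_ss _, lmap_from_ss _⟩
    · rcases Nat.lt_or_ge j.1 r with hj | hj
      · exact absurd hij' (by omega)
      · rw [hCa i hi, hCa j hj]
        intro e
        haveI : Subsingleton (ofC B C M ↥(Ns ⟨j.1 - r, by have := j.isLt; omega⟩)).X :=
          inferInstanceAs (Subsingleton PUnit)
        refine ⟨lmap_to_ss _, ?_⟩
        exact congrArg ModuleCat.Hom.hom (hN.1.2 ⟨i.1 - r, by have := i.isLt; omega⟩
          ⟨j.1 - r, by have := j.isLt; omega⟩ (show i.1 - r < j.1 - r by omega)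
          (show Ns ⟨i.1 - r, by have := i.isLt; omega⟩ ⟶ Ns ⟨j.1 - r, by have := j.isLt; omega⟩
            from ModuleCat.ofHom e.β))
  · -- completeness
    rintro ⟨p, S, hSb, hleft, hright⟩
    by_cases hp : (p : ℕ) ≤ r
    · by_cases hYss : Subsingleton S.Y
      · -- insert S.X into the B-sequence at position p
        apply hM.2
        refine ⟨⟨(p : ℕ), by omega⟩, ModuleCat.of B S.X, brickX_of_tripBrick hSb hYss, ?_, ?_⟩
        · intro i hi f
          have hi' : (i : ℕ) < (p : ℕ) := hi
          have h0 : ∀ e : Hom (ofB B C M ↥(Ms i)) S, e.α = 0 ∧ e.β = 0 := by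
            rw [← hBt i]
            exact fun e => hleft ⟨i.1, by omega⟩ (by exact hi') e
          exact ModuleCat.hom_ext (h0 ⟨f.hom, 0, fun y m => by
            show f.hom 0 = S.φ ((0 : (ofB B C M ↥(Ms i)).Y →ₗ[C] S.Y) y) m
            rw [map_zero, LinearMap.zero_apply, phi_zero]⟩).1
        · intro j hj f
          have hj' : (p : ℕ) ≤ (j : ℕ) := hj
          have h0 : ∀ e : Hom S (ofB B C M ↥(Ms j)), e.α = 0 ∧ e.β = 0 := by
            rw [← hBt j]
            exact fun e => hright ⟨j.1, by omega⟩ (by exact hj') e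
          exact ModuleCat.hom_ext (h0 ⟨f.hom, 0, fun y m => by
            show f.hom (S.φ y m) = (0 : ↥(Ms j))
            rw [Subsingleton.elim y (0 : S.Y), phi_zero, map_zero]⟩).1
      · -- S.Y ≠ 0 : a simple quotient of S.Y can be inserted at the start of the N-sequence
        haveI : Nontrivial S.Y := not_subsingleton_iff_nontrivial.mp hYss
        obtain ⟨y, hy⟩ := exists_ne (0 : S.Y)
        obtain ⟨T, _, _, hTs, π, hπ⟩ := exists_simple_quot (k := k) (C := C) y hy
        apply hN.2
        refine ⟨⟨0, by omega⟩, ModuleCat.of C T, brick_of_simple hTs,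
          fun i hi _ => absurd (show (i : ℕ) < 0 from hi) (Nat.not_lt_zero _), ?_⟩
        intro t ht f
        have h0 : ∀ e : Hom S (ofC B C M ↥(Ns t)), e.α = 0 ∧ e.β = 0 := by
          rw [← hCt t]
          exact fun e => hright ⟨r + t.1, by omega⟩ (show (p : ℕ) ≤ r + t.1 by omega) e
        have hcomp : f.hom ∘ₗ π = 0 :=
          (h0 ⟨0, f.hom ∘ₗ π, fun y' m => by
            haveI : Subsingleton (ofC B C M ↥(Ns t)).X := inferInstanceAs (Subsingleton PUnit)
            exact Subsingleton.elim _ _⟩).2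
        refine ModuleCat.hom_ext (LinearMap.ext fun v => ?_)
        obtain ⟨w, rfl⟩ := hπ v
        exact LinearMap.ext_iff.mp hcomp w
    · have hp' : r < (p : ℕ) := by omega
      by_cases hXss : Subsingleton S.X
      · -- insert S.Y into the N-sequence at position p - r
        apply hN.2
        refine ⟨⟨(p : ℕ) - r, by have := p.isLt; omega⟩, ModuleCat.of C S.Y,
          brickY_of_tripBrick hSb hXss, ?_, ?_⟩
        · intro t ht f
          have ht' : (t : ℕ) < (p : ℕ) - r := ht
          have h0 : ∀ e : Hom (ofC B C M ↥(Ns t)) S, e.α = 0 ∧ e.β = 0 := by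
            rw [← hCt t]
            exact fun e => hleft ⟨r + t.1, by omega⟩ (show r + t.1 < (p : ℕ) by omega) e
          exact ModuleCat.hom_ext (h0 ⟨0, f.hom, fun y' m => by
            haveI : Subsingleton (ofC B C M ↥(Ns t)).X := inferInstanceAs (Subsingleton PUnit)
            exact Subsingleton.elim _ _⟩).2
        · intro t ht f
          have ht' : (p : ℕ) - r ≤ (t : ℕ) := ht
          have h0 : ∀ e : Hom S (ofC B C M ↥(Ns t)), e.α = 0 ∧ e.β = 0 := by
            rw [← hCt t]
            exact fun e => hright ⟨r + t.1, by omega⟩ (show (p : ℕ) ≤ r + t.1 by omega) e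
          exact ModuleCat.hom_ext (h0 ⟨0, f.hom, fun y' m => by
            haveI : Subsingleton (ofC B C M ↥(Ns t)).X := inferInstanceAs (Subsingleton PUnit)
            exact Subsingleton.elim _ _⟩).2
      · -- S.X ≠ 0 : a simple submodule of S.X can be inserted at the end of the B-sequence
        haveI : Nontrivial S.X := not_subsingleton_iff_nontrivial.mp hXss
        obtain ⟨x, hx⟩ := exists_ne (0 : S.X)
        obtain ⟨T, _, _, hTs, ι, hι⟩ := exists_simple_sub (k := k) (B := B) x hx
        apply hM.2
        refine ⟨⟨r, by omega⟩, ModuleCat.of B T, brick_of_simple hTs, ?_,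
          fun j hj _ => absurd j.isLt (by have : r ≤ (j : ℕ) := hj; omega)⟩
        intro i hi f
        have h0 : ∀ e : Hom (ofB B C M ↥(Ms i)) S, e.α = 0 ∧ e.β = 0 := by
          rw [← hBt i]
          exact fun e => hleft ⟨i.1, by omega⟩ (show (i : ℕ) < (p : ℕ) by omega) e
        have hcomp : ι ∘ₗ f.hom = 0 :=
          (h0 ⟨ι ∘ₗ f.hom, 0, fun y m => by
            show (ι ∘ₗ f.hom) 0 = S.φ ((0 : (ofB B C M ↥(Ms i)).Y →ₗ[C] S.Y) y) m
            rw [map_zero, LinearMap.zero_apply, phi_zero]⟩).1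
        refine ModuleCat.hom_ext (LinearMap.ext fun v => ?_)
        exact hι ((LinearMap.ext_iff.mp hcomp v).trans (map_zero ι).symm)

end MainStmt16

open Paper Tri in
/-- complete forward hom-orthogonal sequences in `mod B` and `mod C`
concatenate (via the embeddings `X ↦ (X,0)` and `Y ↦ (0,Y)`) to a complete forward
hom-orthogonal sequence in `mod A` for `A = [[B,0],[M,C]]`. -/
theorem stmt16
    {k : Type} [Field k] {B C M : Type}
    [Ring B] [Algebra k B] [FiniteDimensional k B]
    [Ring C] [Algebra k C] [FiniteDimensional k C]
    [AddCommGroup M] [Module B M] [Module C M] [SMulCommClass B C M]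
    [Module.Finite C M]
    (r s : ℕ) (Ms : Fin r → ModuleCat.{0} B) (Ns : Fin s → ModuleCat.{0} C)
    (hM : IsCFHOMod B r Ms) (hN : IsCFHOMod C s Ns) :
    IsCFHOT (r + s) (fun i : Fin (r + s) =>
      if h : (i : ℕ) < r then ofB B C M ↥(Ms ⟨(i : ℕ), h⟩)
      else ofC B C M ↥(Ns ⟨(i : ℕ) - r, by have := i.isLt; omega⟩)) := by
  refine stmt16_main_aux (k := k) r s Ms Ns hM hN _ ?_ ?_
  · intro i h
    exact dif_pos h
  · intro i h
    exact dif_neg (not_lt.mpr h)
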